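/- Let F be a finite nonempty type, let P be an F-by-F real matrix with nonnegative entries such that every row of P sums to 1, let α be a real number with 0 < α < 1, and let x be a real row vector indexed by F. Define z_0 = x and z_t = α·(z_{t−1} · P) + x for t ≥ 1. Then the sequence (z_t) converges, and its limit is x · (I − α·P)⁻¹. -/

import Mathlib

open Matrix Finset

/-- For row-stochastic `P` and `0 < α < 1`, the iterates of `z ← α·z·P + x`
starting from `z = x` converge to `x · (I − α·P)⁻¹`. -/
theorem stmt_11 {F : Type*} [Fintype F] [Nonempty F] [DecidableEq F]
    (P : Matrix F F ℝ)
    (hP : ∀ i j, 0 ≤ P i j)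
    (hrow : ∀ i, ∑ j, P i j = 1)
    (α : ℝ) (hα : 0 < α) (hα1 : α < 1)
    (x : F → ℝ)
    (z : ℕ → F → ℝ)
    (hz0 : z 0 = x)
    (hz : ∀ t : ℕ, z (t + 1) = α • (z t ᵥ* P) + x) :
    Filter.Tendsto z Filter.atTop (nhds (x ᵥ* (1 - α • P)⁻¹)) := by
  letI : SeminormedRing (Matrix F F ℝ) := Matrix.linftyOpSemiNormedRing
  letI : NormedRing (Matrix F F ℝ) := Matrix.linftyOpNormedRing
  letI : NormedAlgebra ℝ (Matrix F F ℝ) := Matrix.linftyOpNormedAlgebra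
  haveI : CompleteSpace (Matrix F F ℝ) :=
    (by infer_instance : CompleteSpace (F → F → ℝ))
  set M : Matrix F F ℝ := α • P with hMdef
  -- norm bound
  have hnorm : ‖M‖ ≤ α := by
    rw [Matrix.linfty_opNorm_def]
    have h1 : (Finset.univ.sup fun i => ∑ j, ‖M i j‖₊) ≤ Real.toNNReal α := by
      apply Finset.sup_le
      intro i _
      rw [← NNReal.coe_le_coe]
      push_cast
      rw [Real.coe_toNNReal α hα.le]
      have : ∀ j, ‖M i j‖ = α * P i j := by
        intro j
        have : M i j = α * P i j := by simp [hMdef, Matrix.smul_apply, smul_eq_mul]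
        rw [this, Real.norm_eq_abs, abs_of_nonneg (mul_nonneg hα.le (hP i j))]
      rw [Finset.sum_congr rfl fun j _ => this j, ← Finset.mul_sum, hrow i, mul_one]
    have h2 := NNReal.coe_le_coe.mpr h1
    rw [Real.coe_toNNReal α hα.le] at h2
    exact h2
  have hM : ‖M‖ < 1 := lt_of_le_of_lt hnorm hα1
  -- geometric series
  have hsum : HasSum (fun n => M ^ n) (Ring.inverse (1 - M)) :=
    hasSum_geom_series_inverse M hM
  have hS : Filter.Tendsto (fun t => ∑ k ∈ Finset.range (t + 1), M ^ k)
      Filter.atTop (nhds (Ring.inverse (1 - M))) :=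
    hsum.tendsto_sum_nat.comp (Filter.tendsto_add_atTop_nat 1)
  -- closed form for z
  have hz' : ∀ t, z t = x ᵥ* (∑ k ∈ Finset.range (t + 1), M ^ k) := by
    intro t
    induction t with
    | zero => simp [hz0]
    | succ t ih =>
        rw [hz t, ih, Matrix.vecMul_vecMul]
        have hgeom : ∑ k ∈ Finset.range (t + 1 + 1), M ^ k
            = (∑ k ∈ Finset.range (t + 1), M ^ k) * M + 1 := by
          rw [Finset.sum_range_succ' (fun k => M ^ k) (t + 1), Finset.sum_mul]
          simp [pow_succ]
        rw [hgeom, Matrix.vecMul_add, Matrix.vecMul_one]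
        congr 1
        have h4 : (∑ k ∈ Finset.range (t + 1), M ^ k) * M
            = α • ((∑ k ∈ Finset.range (t + 1), M ^ k) * P) := by
          rw [hMdef, mul_smul_comm]
        rw [h4]
        funext j
        simp only [Pi.smul_apply, smul_eq_mul, Matrix.vecMul, dotProduct,
          Matrix.smul_apply, Finset.mul_sum]
        exact Finset.sum_congr rfl fun i _ => by ring
  -- continuity of A ↦ x ᵥ* A
  have hcont : Continuous (fun A : Matrix F F ℝ => x ᵥ* A) := by
    apply continuous_pi
    intro j
    simp only [Matrix.vecMul, dotProduct]
    exact continuous_finset_sum _ fun i _ =>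
      continuous_const.mul ((continuous_apply j).comp (continuous_apply i))
  have := (hcont.tendsto (Ring.inverse (1 - M))).comp hS
  have hfinal : Filter.Tendsto z Filter.atTop (nhds (x ᵥ* Ring.inverse (1 - M))) := by
    convert this using 1
    funext t
    exact hz' t
  rw [Matrix.nonsing_inv_eq_ringInverse]
  exact hfinal
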